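/- arXiv:2203.01592 — 5 statements merged into one kernel-verified Lean document; each statement's English description precedes it below -/
import Mathlib

section
/- Let A : ℕ → (0,∞) be a non-decreasing function such that the series ∑_{i=1}^∞ 1/A(i) diverges. Then the series ∑_{i=1}^∞ min(1/A(i), 1/i) also diverges. -/
theorem stmt_0 (A : ℕ → ℝ) (hmono : Monotone A)
    (hpos : ∀ i, 1 ≤ i → 0 < A i)
    (hdiv : ¬ Summable (fun i : ℕ => 1 / A (i + 1))) :
    ¬ Summable (fun i : ℕ => min (1 / A (i + 1)) (1 / (i + 1 : ℝ))) := by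
  intro h
  apply hdiv
  -- Step 1: eventually (i : ℝ) ≤ A i
  have key : ∃ N : ℕ, ∀ i, N ≤ i → (i : ℝ) ≤ A i := by
    by_contra hc
    push_neg at hc
    rw [summable_iff_vanishing] at h
    obtain ⟨s, hs⟩ := h (Metric.ball 0 (1/2)) (Metric.ball_mem_nhds 0 (by norm_num))
    set N0 : ℕ := s.sup id + 1 with hN0
    obtain ⟨i, hiN, hAi⟩ := hc (2 * N0)
    have hi1 : 1 ≤ i := by omega
    have hipos : (0 : ℝ) < (i : ℝ) := by positivity
    set t : Finset ℕ := Finset.Ico N0 i with ht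
    have hdisj : Disjoint t s := by
      rw [Finset.disjoint_left]
      intro k hk hks
      have h1 : N0 ≤ k := (Finset.mem_Ico.mp hk).1
      have h2 : k ≤ s.sup id := Finset.le_sup (f := id) hks
      omega
    have hball := hs t hdisj
    rw [Metric.mem_ball, dist_zero_right] at hball
    have hterm : ∀ k ∈ t, 1 / (i : ℝ) ≤ min (1 / A (k + 1)) (1 / (k + 1 : ℝ)) := by
      intro k hk
      obtain ⟨hk1, hk2⟩ := Finset.mem_Ico.mp hk
      have hk3 : k + 1 ≤ i := hk2
      have hApos : 0 < A (k + 1) := hpos _ (by omega)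
      have hA_le : A (k + 1) ≤ (i : ℝ) := le_trans (hmono hk3) hAi.le
      refine le_min (one_div_le_one_div_of_le hApos hA_le) ?_
      apply one_div_le_one_div_of_le (by positivity)
      have : ((k : ℝ) + 1) ≤ (i : ℝ) := by exact_mod_cast hk3
      linarith
    have hcard : t.card = i - N0 := Nat.card_Ico N0 i
    have hsum : ((i - N0 : ℕ) : ℝ) * (1 / (i : ℝ)) ≤
        ∑ k ∈ t, min (1 / A (k + 1)) (1 / (k + 1 : ℝ)) := by
      calc ((i - N0 : ℕ) : ℝ) * (1 / (i : ℝ))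
          = t.card • (1 / (i : ℝ)) := by rw [hcard, nsmul_eq_mul]
        _ ≤ ∑ k ∈ t, min (1 / A (k + 1)) (1 / (k + 1 : ℝ)) :=
            Finset.card_nsmul_le_sum t _ _ hterm
    have hhalf : (1 / 2 : ℝ) ≤ ((i - N0 : ℕ) : ℝ) * (1 / (i : ℝ)) := by
      have h1 : (i : ℝ) ≤ 2 * ((i - N0 : ℕ) : ℝ) := by
        have : i ≤ 2 * (i - N0) := by omega
        exact_mod_cast this
      rw [mul_one_div, le_div_iff₀ hipos]
      linarith
    have habs : ∑ k ∈ t, min (1 / A (k + 1)) (1 / (k + 1 : ℝ)) ≤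
        ‖∑ k ∈ t, min (1 / A (k + 1)) (1 / (k + 1 : ℝ))‖ := le_abs_self _
    linarith
  -- Step 2: conclude summability of 1/A(i+1)
  obtain ⟨N, hN⟩ := key
  have h2 : Summable (fun k : ℕ => min (1 / A (k + N + 1)) (1 / ((k + N : ℕ) + 1 : ℝ))) :=
    (summable_nat_add_iff (f := fun i : ℕ => min (1 / A (i + 1)) (1 / (i + 1 : ℝ))) N).mpr h
  have h5 : Summable (fun k : ℕ => 1 / A (k + N + 1)) := by
    refine h2.congr fun k => ?_
    have hm : N ≤ k + N + 1 := by omega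
    have hApos : 0 < A (k + N + 1) := hpos _ (by omega)
    have h3 : ((k + N + 1 : ℕ) : ℝ) ≤ A (k + N + 1) := hN _ hm
    have h4 : 1 / A (k + N + 1) ≤ 1 / ((k + N : ℕ) + 1 : ℝ) := by
      apply one_div_le_one_div_of_le (by positivity)
      push_cast at h3 ⊢
      linarith
    rw [min_eq_left h4]
  exact (summable_nat_add_iff (f := fun i : ℕ => 1 / A (i + 1)) N).mp h5
end

section
/- Let A : ℕ → ℝ be non-decreasing with A(i) ≥ i for all i ≥ 1, set 𝒜(n) = ∑_{z=1}^n 1/A(z) and a_n = n!/𝒜(n)^n for n ≥ 1. Then a_{n+1}/a_n → ∞ as n → ∞; in particular there exists a constant C_a > 1 such that ∑_{i=j}^∞ 1/a_i ≤ C_a/a_j for all j ∈ ℕ. -/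
open Filter Finset Real Topology

theorem stmt_4 (A : ℕ → ℝ) (hmono : Monotone A)
    (hA : ∀ i : ℕ, 1 ≤ i → (i : ℝ) ≤ A i)
    (a : ℕ → ℝ)
    (ha : ∀ n, 1 ≤ n → a n = (Nat.factorial n : ℝ) / (∑ z ∈ Finset.Icc 1 n, 1 / A z) ^ n) :
    Filter.Tendsto (fun n => a (n + 1) / a n) Filter.atTop Filter.atTop ∧
      ∃ C : ℝ, 1 < C ∧ ∀ j : ℕ, 1 ≤ j → ∑' i : ℕ, 1 / a (j + i) ≤ C / a j := by
  set S : ℕ → ℝ := fun n => ∑ z ∈ Finset.Icc 1 n, 1 / A z with hS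
  have hApos : ∀ z : ℕ, 1 ≤ z → 0 < A z := by
    intro z hz
    exact lt_of_lt_of_le (by exact_mod_cast Nat.lt_of_lt_of_le zero_lt_one hz) (hA z hz)
  have hSpos : ∀ n : ℕ, 1 ≤ n → 0 < S n := by
    intro n hn
    apply Finset.sum_pos
    · intro z hz
      simp only [Finset.mem_Icc] at hz
      exact div_pos one_pos (hApos z hz.1)
    · exact ⟨1, by simp [Finset.mem_Icc, hn]⟩
  have hSmono : Monotone S := by
    intro m n hmn
    apply Finset.sum_le_sum_of_subset_of_nonneg
    · exact Finset.Icc_subset_Icc_right hmn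
    · intro z hz _
      simp only [Finset.mem_Icc] at hz
      exact le_of_lt (div_pos one_pos (hApos z hz.1))
  have hS1 : S 1 = 1 / A 1 := by simp [hS]
  have hA1pos : 0 < A 1 := hApos 1 le_rfl
  have hSsucc : ∀ n : ℕ, S (n + 1) = S n + 1 / A (n + 1) := by
    intro n
    simp only [hS]
    rw [Finset.sum_Icc_succ_top (by omega)]
  have hapos : ∀ n : ℕ, 1 ≤ n → 0 < a n := by
    intro n hn
    rw [ha n hn]
    have := hSpos n hn
    positivity
  -- ratio lower bound
  have hratio : ∀ n : ℕ, 1 ≤ n →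
      Real.exp (-(A 1)) * (((n : ℝ) + 1) / S (n + 1)) ≤ a (n + 1) / a n := by
    intro n hn
    have hP : 0 < S (n + 1) := hSpos (n + 1) (by omega)
    have hQ : 0 < S n := hSpos n hn
    have hQ1 : 1 / A 1 ≤ S n := by rw [← hS1]; exact hSmono hn
    have hAn1 : (0 : ℝ) < (n : ℝ) + 1 := by positivity
    -- step a : S (n+1) ≤ S n * (1 + A 1 / (n+1))
    have hstepa : S (n + 1) ≤ S n * (1 + A 1 / ((n : ℝ) + 1)) := by
      rw [hSsucc n, mul_add, mul_one]
      gcongr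
      have h1 : 1 / A (n + 1) ≤ 1 / ((n : ℝ) + 1) := by
        apply one_div_le_one_div_of_le hAn1
        have := hA (n + 1) (by omega)
        push_cast at this ⊢
        linarith
      have h2 : (1 : ℝ) ≤ S n * A 1 := by
        rw [div_le_iff₀ hA1pos] at hQ1
        linarith
      calc 1 / A (n + 1) ≤ 1 / ((n : ℝ) + 1) := h1
        _ = 1 * (1 / ((n : ℝ) + 1)) := by ring
        _ ≤ (S n * A 1) * (1 / ((n : ℝ) + 1)) := by
            apply mul_le_mul_of_nonneg_right h2 (by positivity)
        _ = S n * (A 1 / ((n : ℝ) + 1)) := by ring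
    -- step c : (1 + A 1/(n+1))^n ≤ exp (A 1)
    have hstepc : (1 + A 1 / ((n : ℝ) + 1)) ^ n ≤ Real.exp (A 1) := by
      have h1 : 1 + A 1 / ((n : ℝ) + 1) ≤ Real.exp (A 1 / ((n : ℝ) + 1)) := by
        have := Real.add_one_le_exp (A 1 / ((n : ℝ) + 1))
        linarith
      calc (1 + A 1 / ((n : ℝ) + 1)) ^ n ≤ (Real.exp (A 1 / ((n : ℝ) + 1))) ^ n := by
            apply pow_le_pow_left₀ (by positivity) h1
        _ = Real.exp ((n : ℝ) * (A 1 / ((n : ℝ) + 1))) := by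
            rw [← Real.exp_nat_mul]
        _ ≤ Real.exp (A 1) := by
            apply Real.exp_le_exp.mpr
            rw [mul_div_assoc']
            rw [div_le_iff₀ hAn1]
            have : (0:ℝ) ≤ A 1 := le_of_lt hA1pos
            nlinarith
    -- key : exp(-(A 1)) * S(n+1)^n ≤ S n ^ n
    have hkey : Real.exp (-(A 1)) * S (n + 1) ^ n ≤ S n ^ n := by
      have h1 : S (n + 1) ^ n ≤ S n ^ n * Real.exp (A 1) := by
        calc S (n + 1) ^ n ≤ (S n * (1 + A 1 / ((n : ℝ) + 1))) ^ n := by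
              apply pow_le_pow_left₀ (le_of_lt hP) hstepa
          _ = S n ^ n * (1 + A 1 / ((n : ℝ) + 1)) ^ n := by rw [mul_pow]
          _ ≤ S n ^ n * Real.exp (A 1) := by
              apply mul_le_mul_of_nonneg_left hstepc (by positivity)
      rw [Real.exp_neg]
      rw [inv_mul_le_iff₀ (Real.exp_pos _)]
      linarith [h1]
    -- ratio formula
    have hform : a (n + 1) / a n = ((n : ℝ) + 1) * S n ^ n / S (n + 1) ^ (n + 1) := by
      rw [ha (n + 1) (by omega), ha n hn]
      have hfact : (Nat.factorial (n + 1) : ℝ) = ((n : ℝ) + 1) * (Nat.factorial n : ℝ) := by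
        push_cast [Nat.factorial_succ]; ring
      rw [hfact]
      change ((n : ℝ) + 1) * (Nat.factorial n : ℝ) / S (n + 1) ^ (n + 1) / ((Nat.factorial n : ℝ) / S n ^ n) = _
      have hf : (Nat.factorial n : ℝ) ≠ 0 := by positivity
      field_simp
    rw [hform]
    have : Real.exp (-(A 1)) * (((n : ℝ) + 1) / S (n + 1))
        = ((n : ℝ) + 1) * (Real.exp (-(A 1)) * S (n + 1) ^ n) / S (n + 1) ^ (n + 1) := by
      rw [pow_succ]
      field_simp
    rw [this]
    gcongr
  -- tendsto of (n+1)/S(n+1)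
  have hterm0 : Tendsto (fun i : ℕ => 1 / A (i + 1)) atTop (𝓝 0) := by
    apply squeeze_zero (g := fun i : ℕ => 1 / ((i : ℝ) + 1))
    · intro i; exact le_of_lt (div_pos one_pos (hApos (i + 1) (by omega)))
    · intro i
      apply one_div_le_one_div_of_le (by positivity)
      have := hA (i + 1) (by omega)
      push_cast at this ⊢
      linarith
    · exact tendsto_one_div_add_atTop_nhds_zero_nat
  have hSrange : ∀ n : ℕ, S n = ∑ i ∈ Finset.range n, 1 / A (i + 1) := by
    intro n
    induction n with
    | zero => simp [hS]
    | succ k ih => rw [hSsucc, ih, Finset.sum_range_succ]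
  have hces : Tendsto (fun n : ℕ => ((n : ℝ))⁻¹ * S n) atTop (𝓝 0) := by
    have := hterm0.cesaro
    simpa [hSrange] using this
  have hSdiv : Tendsto (fun n : ℕ => (n : ℝ) / S n) atTop atTop := by
    have h1 : Tendsto (fun n : ℕ => ((n : ℝ))⁻¹ * S n) atTop (𝓝[>] 0) := by
      rw [tendsto_nhdsWithin_iff]
      refine ⟨hces, ?_⟩
      filter_upwards [eventually_ge_atTop 1] with n hn
      have : (0 : ℝ) < n := by exact_mod_cast Nat.lt_of_lt_of_le zero_lt_one hn
      exact mul_pos (inv_pos.mpr this) (hSpos n hn)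
    have h2 := h1.inv_tendsto_nhdsGT_zero
    have : (fun n : ℕ => ((n : ℝ))⁻¹ * S n)⁻¹ = fun n : ℕ => (n : ℝ) / S n := by
      funext n
      simp [Pi.inv_apply, mul_inv, div_eq_mul_inv, mul_comm]
    rwa [this] at h2
  have hSdiv1 : Tendsto (fun n : ℕ => ((n : ℝ) + 1) / S (n + 1)) atTop atTop := by
    exact (hSdiv.comp (tendsto_add_atTop_nat 1)).congr fun n => by
      simp [Function.comp]
  have htendaux : Tendsto (fun n : ℕ => Real.exp (-(A 1)) * (((n : ℝ) + 1) / S (n + 1)))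
      atTop atTop := hSdiv1.const_mul_atTop (Real.exp_pos _)
  have htend : Tendsto (fun n => a (n + 1) / a n) atTop atTop := by
    apply tendsto_atTop_mono' atTop _ htendaux
    filter_upwards [eventually_ge_atTop 1] with n hn
    exact hratio n hn
  refine ⟨htend, ?_⟩
  -- part 2
  obtain ⟨N0, hN0⟩ := Filter.eventually_atTop.mp (htend.eventually_ge_atTop 2)
  set N : ℕ := max N0 1 with hNdef
  have hN1 : 1 ≤ N := le_max_right _ _
  have hstep : ∀ n : ℕ, N ≤ n → 2 * a n ≤ a (n + 1) := by
    intro n hn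
    have h1 := hN0 n (le_trans (le_max_left _ _) hn)
    have h2 : 0 < a n := hapos n (le_trans hN1 hn)
    rw [le_div_iff₀ h2] at h1
    linarith
  have hgeo : ∀ n : ℕ, N ≤ n → ∀ i : ℕ, 2 ^ i * a n ≤ a (n + i) := by
    intro n hn i
    induction i with
    | zero => simp
    | succ k ih =>
      have h1 := hstep (n + k) (by omega)
      calc 2 ^ (k + 1) * a n = 2 * (2 ^ k * a n) := by ring
        _ ≤ 2 * a (n + k) := by linarith
        _ ≤ a (n + k + 1) := h1
        _ = a (n + (k + 1)) := by ring_nf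
  have hinvb : ∀ n : ℕ, N ≤ n → ∀ i : ℕ, 1 / a (n + i) ≤ (1 / 2) ^ i * (1 / a n) := by
    intro n hn i
    have han : 0 < a n := hapos n (le_trans hN1 hn)
    have h2 : (0 : ℝ) < 2 ^ i * a n := by positivity
    have h1 : 1 / a (n + i) ≤ 1 / (2 ^ i * a n) :=
      one_div_le_one_div_of_le h2 (hgeo n hn i)
    calc 1 / a (n + i) ≤ 1 / (2 ^ i * a n) := h1
      _ = (1 / 2) ^ i * (1 / a n) := by
        rw [div_pow, one_pow, div_mul_div_comm, one_mul]
  have hgsum : Summable (fun i : ℕ => ((1 : ℝ) / 2) ^ i) :=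
    summable_geometric_of_lt_one (by norm_num) (by norm_num)
  have hsumN : Summable (fun i : ℕ => 1 / a (N + i)) := by
    apply Summable.of_nonneg_of_le
    · intro i; exact le_of_lt (one_div_pos.mpr (hapos (N + i) (by omega)))
    · intro i; exact hinvb N le_rfl i
    · exact hgsum.mul_right (1 / a N)
  have hsum_all : Summable (fun n : ℕ => 1 / a n) := by
    rw [← summable_nat_add_iff N]
    exact hsumN.congr fun i => by rw [add_comm]
  have hsumj : ∀ j : ℕ, Summable (fun i : ℕ => 1 / a (j + i)) := by
    intro j
    have := (summable_nat_add_iff j).mpr hsum_all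
    exact this.congr fun i => by rw [add_comm]
  have htail : ∀ j : ℕ, N ≤ j → ∑' i : ℕ, 1 / a (j + i) ≤ 2 * (1 / a j) := by
    intro j hj
    have h1 : ∑' i : ℕ, 1 / a (j + i) ≤ ∑' i : ℕ, ((1 : ℝ) / 2) ^ i * (1 / a j) :=
      Summable.tsum_le_tsum (hinvb j hj) (hsumj j) (hgsum.mul_right _)
    have h2 : ∑' i : ℕ, ((1 : ℝ) / 2) ^ i * (1 / a j)
        = (∑' i : ℕ, ((1 : ℝ) / 2) ^ i) * (1 / a j) := tsum_mul_right
    have h3 : ∑' i : ℕ, ((1 : ℝ) / 2) ^ i = 2 := by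
      rw [tsum_geometric_of_lt_one (by norm_num) (by norm_num)]
      norm_num
    rw [h2, h3] at h1
    exact h1
  have hne : (Finset.Icc 1 N).Nonempty := ⟨1, by simp [hN1]⟩
  set M : ℝ := (Finset.Icc 1 N).sup' hne (fun j => (∑' i : ℕ, 1 / a (j + i)) * a j) with hM
  refine ⟨max 2 M, lt_of_lt_of_le one_lt_two (le_max_left _ _), ?_⟩
  intro j hj
  have haj : 0 < a j := hapos j hj
  rw [le_div_iff₀ haj]
  rcases le_or_gt j N with hjN | hjN
  · have h1 : (∑' i : ℕ, 1 / a (j + i)) * a j ≤ M :=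
      Finset.le_sup' (fun j => (∑' i : ℕ, 1 / a (j + i)) * a j) (Finset.mem_Icc.mpr ⟨hj, hjN⟩)
    exact le_trans h1 (le_max_right _ _)
  · have h1 := htail j (le_of_lt hjN)
    have h2 : (∑' i : ℕ, 1 / a (j + i)) * a j ≤ 2 * (1 / a j) * a j :=
      mul_le_mul_of_nonneg_right h1 (le_of_lt haj)
    have h3 : 2 * (1 / a j) * a j = 2 := by field_simp
    rw [h3] at h2
    exact le_trans h2 (le_max_left _ _)
end

section
/- Let (ψ_x)_{x∈ℤ₊} be independent ℤ₊-valued random variables. If ∑_{m=1}^∞ ∏_{i=0}^m (1 − P(ψ_{m−i} > i)) < ∞, then almost surely only finitely many of the events {Y_m = 0} occur, where Y_m = max_{0≤j≤m}(ψ_{m−j} − j) ∨ 0; consequently the TADIBP system percolates almost surely. -/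
open MeasureTheory ProbabilityTheory Filter

theorem stmt_12 {Ω : Type*} [MeasurableSpace Ω] (μ : Measure Ω) [IsProbabilityMeasure μ]
    (ψ : ℕ → Ω → ℕ) (hmeas : ∀ x, Measurable (ψ x))
    (hindep : iIndepFun ψ μ)
    (hconv : (∑' m : ℕ, ∏ i ∈ Finset.range (m + 1), (1 - μ {ω | i < ψ (m - i) ω})) ≠ ⊤) :
    ∀ᵐ ω ∂μ, ∃ x₀ : ℕ, ∀ m, x₀ ≤ m →
      0 < (Finset.range (m + 1)).sup (fun j => ψ (m - j) ω - j) := by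
  set s : ℕ → Set Ω := fun m => ⋂ i ∈ Finset.range (m + 1), {ω | ψ i ω ≤ m - i} with hs
  have hmeq : ∀ m, μ (s m) = ∏ i ∈ Finset.range (m + 1), (1 - μ {ω | i < ψ (m - i) ω}) := by
    intro m
    have h1 : μ (s m) = ∏ i ∈ Finset.range (m + 1), μ {ω | ψ i ω ≤ m - i} := by
      exact hindep.meas_biInter fun i _ => ⟨{k | k ≤ m - i}, trivial, rfl⟩
    rw [h1]
    rw [← Finset.prod_range_reflect]
    refine Finset.prod_congr rfl ?_
    intro j hj
    rw [Finset.mem_range] at hj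
    have hj' : j ≤ m := Nat.lt_succ_iff.mp hj
    have h2 : m + 1 - 1 - j = m - j := by omega
    have h3 : m - (m - j) = j := Nat.sub_sub_self hj'
    rw [h2, h3]
    have hc : {ω | j < ψ (m - j) ω}ᶜ = {ω | ψ (m - j) ω ≤ j} := by
      ext ω; simp [not_lt]
    rw [← hc, prob_compl_eq_one_sub]
    exact hmeas (m - j) (by trivial : MeasurableSet {k : ℕ | j < k})
  have hsum : (∑' m, μ (s m)) ≠ ⊤ := by
    rwa [tsum_congr hmeq]
  have hlim : μ (limsup s atTop) = 0 := measure_limsup_atTop_eq_zero hsum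
  have hae : ∀ᵐ ω ∂μ, ω ∉ limsup s atTop := by
    rw [ae_iff]
    simpa using hlim
  filter_upwards [hae] with ω hω
  rw [mem_limsup_iff_frequently_mem, Filter.not_frequently] at hω
  rw [Filter.eventually_atTop] at hω
  obtain ⟨x₀, hx₀⟩ := hω
  refine ⟨x₀, fun m hm => ?_⟩
  have := hx₀ m hm
  simp only [hs, Set.mem_iInter, Set.mem_setOf_eq, not_forall] at this
  obtain ⟨i, hi, hlt⟩ := this
  rw [Finset.mem_range] at hi
  have hi' : i ≤ m := Nat.lt_succ_iff.mp hi
  rw [not_le] at hlt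
  refine Finset.lt_sup_iff.mpr ⟨m - i, Finset.mem_range.mpr (by omega), ?_⟩
  have : m - (m - i) = i := Nat.sub_sub_self hi'
  rw [this]
  omega
end

section
/- Let A : ℕ → (1,∞) be non-decreasing with ∑_{z=1}^∞ 1/A(z) < ∞, and define E₂(i,m) = (1/(e·√(i+1))) · (e^{1 − 1/A(m+1)}/(2A(m+1)))^{i+1}. Then there exists m₀ ∈ ℕ such that for all m ≥ m₀ and all 0 ≤ i ≤ m, E₂(i,m) ≥ (1/(2A(m+1)))^{i+2}. -/
theorem stmt_14 (A : ℕ → ℝ) (hmono : Monotone A)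
    (hA : ∀ z : ℕ, 1 ≤ z → 1 < A z)
    (hsum : Summable (fun z : ℕ => 1 / A (z + 1))) :
    ∃ m₀ : ℕ, ∀ m, m₀ ≤ m → ∀ i : ℕ, i ≤ m →
      (1 / (Real.exp 1 * Real.sqrt (i + 1))) *
          (Real.exp (1 - 1 / A (m + 1)) / (2 * A (m + 1))) ^ (i + 1) ≥
        (1 / (2 * A (m + 1))) ^ (i + 2) := by
  have h0 : Filter.Tendsto (fun z : ℕ => 1 / A (z + 1)) Filter.atTop (nhds 0) :=
    hsum.tendsto_atTop_zero
  obtain ⟨N, hN⟩ := (h0.eventually (gt_mem_nhds (by norm_num : (0:ℝ) < 1/2))).exists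
  refine ⟨N, fun m hm i hi => ?_⟩
  have hA1 : 1 < A (N + 1) := hA _ (by omega)
  have hA2 : 2 < A (N + 1) := by
    rw [div_lt_div_iff₀ (by linarith) (by norm_num)] at hN
    linarith
  have ha : 2 < A (m + 1) := lt_of_lt_of_le hA2 (hmono (by omega))
  set a := A (m + 1) with hadef
  have hapos : 0 < a := by linarith
  have hsq : 0 < Real.sqrt ((i : ℝ) + 1) := Real.sqrt_pos.mpr (by positivity)
  have hepos : 0 < Real.exp 1 := Real.exp_pos 1
  -- 1 - 1/a ≥ 1/2
  have h1 : (1:ℝ)/2 ≤ 1 - 1/a := by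
    have : 1/a ≤ 1/2 := by
      rw [div_le_div_iff₀ hapos (by norm_num)]; linarith
    linarith
  have hexp1 : Real.exp (((i:ℝ)+1)/2) ≤ Real.exp ((1 - 1/a) * ((i:ℝ)+1)) := by
    apply Real.exp_le_exp.mpr
    have h : ((i:ℝ)+1)/2 = (1/2) * ((i:ℝ)+1) := by ring
    rw [h]
    exact mul_le_mul_of_nonneg_right h1 (by positivity)
  have hexp2 : Real.sqrt ((i:ℝ)+1) ≤ Real.exp (((i:ℝ)+1)/2) := by
    have h1 : ((i:ℝ)+1) ≤ Real.exp (((i:ℝ)+1)/2) ^ 2 := by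
      rw [← Real.exp_nat_mul]
      have : ((2:ℕ):ℝ) * (((i:ℝ)+1)/2) = (i:ℝ)+1 := by push_cast; ring
      rw [this]
      linarith [Real.add_one_le_exp ((i:ℝ)+1)]
    calc Real.sqrt ((i:ℝ)+1) ≤ Real.sqrt (Real.exp (((i:ℝ)+1)/2) ^ 2) :=
          Real.sqrt_le_sqrt h1
      _ = Real.exp (((i:ℝ)+1)/2) := Real.sqrt_sq (le_of_lt (Real.exp_pos _))
  have he4 : Real.exp 1 ≤ 2 * a := by
    have := Real.exp_one_lt_d9
    linarith
  have key : Real.exp 1 * Real.sqrt ((i:ℝ)+1) ≤ Real.exp ((1 - 1/a) * ((i:ℝ)+1)) * (2 * a) := by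
    calc Real.exp 1 * Real.sqrt ((i:ℝ)+1)
        ≤ (2 * a) * Real.exp (((i:ℝ)+1)/2) :=
          mul_le_mul he4 hexp2 (le_of_lt hsq) (by linarith)
      _ ≤ (2 * a) * Real.exp ((1 - 1/a) * ((i:ℝ)+1)) := by
          exact mul_le_mul_of_nonneg_left hexp1 (by linarith)
      _ = Real.exp ((1 - 1/a) * ((i:ℝ)+1)) * (2 * a) := by ring
  have hEn : Real.exp (1 - 1/a) ^ (i+1) = Real.exp ((1 - 1/a) * ((i:ℝ)+1)) := by
    rw [← Real.exp_nat_mul]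
    push_cast
    ring_nf
  rw [ge_iff_le, div_pow, one_pow, div_pow, hEn,
    show 1 / (Real.exp 1 * Real.sqrt ((i:ℝ)+1)) *
        (Real.exp ((1 - 1/a) * ((i:ℝ)+1)) / (2*a)^(i+1)) =
      Real.exp ((1 - 1/a) * ((i:ℝ)+1)) / (Real.exp 1 * Real.sqrt ((i:ℝ)+1) * (2*a)^(i+1)) from by
        ring,
    div_le_div_iff₀ (by positivity) (by positivity)]
  have hpow : (0:ℝ) < (2*a) ^ (i+1) := by positivity
  calc 1 * (Real.exp 1 * Real.sqrt ((i:ℝ)+1) * (2*a)^(i+1))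
      = (Real.exp 1 * Real.sqrt ((i:ℝ)+1)) * (2*a)^(i+1) := by ring
    _ ≤ (Real.exp ((1 - 1/a) * ((i:ℝ)+1)) * (2*a)) * (2*a)^(i+1) :=
        mul_le_mul_of_nonneg_right key (le_of_lt hpow)
    _ = Real.exp ((1 - 1/a) * ((i:ℝ)+1)) * (2*a)^(i+2) := by ring
end

section
/- Suppose X is a random variable with P(X ≥ t) = t^{−a} for t ≥ 1, where a ∈ (0,1), and let A(m) = m^α with α > 1, ρ > 1. Then for some c > 0 and all large m, ∑_{i=1}^m P(X ≥ αρi·ln m) ≥ c·m^{1−a}/((1−a)·(αρ·ln m)^a), and hence ∑_{m=1}^∞ exp(−∑_{i=1}^m P(e^X > m^{αρi})) < ∞. -/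
open MeasureTheory

theorem stmt_18 {Ω : Type*} [MeasurableSpace Ω] (μ : Measure Ω) [IsProbabilityMeasure μ]
    (X : Ω → ℝ) (hX : Measurable X)
    (a : ℝ) (ha0 : 0 < a) (ha1 : a < 1)
    (hpareto : ∀ t : ℝ, 1 ≤ t → (μ {ω | t ≤ X ω}).toReal = t ^ (-a))
    (α ρ : ℝ) (hα : 1 < α) (hρ : 1 < ρ) :
    (∃ c : ℝ, 0 < c ∧ ∃ M : ℕ, ∀ m : ℕ, M ≤ m →
        c * (m : ℝ) ^ (1 - a) / ((1 - a) * (α * ρ * Real.log m) ^ a) ≤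
          ∑ i ∈ Finset.Icc 1 m, (μ {ω | α * ρ * i * Real.log m ≤ X ω}).toReal) ∧
      Summable (fun m : ℕ => Real.exp
        (-(∑ i ∈ Finset.Icc 1 m,
            (μ {ω | (m : ℝ) ^ (α * ρ * i) < Real.exp (X ω)}).toReal))) := by
  have hαρ : 1 < α * ρ := by nlinarith
  have hαρ0 : 0 < α * ρ := by linarith
  -- general key lemma: lower bound for the sum Σ (C * i * log m)^{-a} style
  have key : ∀ (C : ℝ), 1 ≤ C → ∀ m : ℕ, 3 ≤ m →
      (m : ℝ) ^ (1 - a) * (C * Real.log m) ^ (-a) ≤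
        ∑ i ∈ Finset.Icc 1 m, (C * i * Real.log m) ^ (-a) := by
    intro C hC m hm
    have hm3 : (3:ℝ) ≤ (m:ℝ) := by exact_mod_cast hm
    have hm0 : (0:ℝ) < m := by linarith
    have hlog1 : 1 ≤ Real.log m := by
      have h3 : Real.exp 1 ≤ (m:ℝ) := by
        have := Real.exp_one_lt_d9
        linarith
      calc (1:ℝ) = Real.log (Real.exp 1) := (Real.log_exp 1).symm
        _ ≤ Real.log m := Real.log_le_log (Real.exp_pos 1) h3
    have hlog0 : 0 < Real.log m := by linarith
    have step : ∀ i ∈ Finset.Icc 1 m,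
        (C * (m:ℝ) * Real.log m) ^ (-a) ≤ (C * i * Real.log m) ^ (-a) := by
      intro i hi
      simp only [Finset.mem_Icc] at hi
      have hi1 : (1:ℝ) ≤ (i:ℝ) := by exact_mod_cast hi.1
      have him : (i:ℝ) ≤ (m:ℝ) := by exact_mod_cast hi.2
      have h1 : 0 < C * (i:ℝ) * Real.log m := by positivity
      exact Real.rpow_le_rpow_of_nonpos h1 (by nlinarith) (by linarith)
    calc (m : ℝ) ^ (1 - a) * (C * Real.log m) ^ (-a)
        = (m : ℝ) * ((C * (m:ℝ) * Real.log m) ^ (-a)) := by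
          have hmrw : (m:ℝ) ^ (1 - a) = (m:ℝ) * (m:ℝ) ^ (-a) := by
            rw [show (1:ℝ) - a = 1 + (-a) by ring, Real.rpow_add hm0, Real.rpow_one]
          rw [show C * (m:ℝ) * Real.log m = (m:ℝ) * (C * Real.log m) by ring,
            Real.mul_rpow hm0.le (by positivity), hmrw]
          ring
      _ = ∑ i ∈ Finset.Icc 1 m, (C * (m:ℝ) * Real.log m) ^ (-a) := by
          rw [Finset.sum_const, Nat.card_Icc]
          simp [nsmul_eq_mul]
      _ ≤ ∑ i ∈ Finset.Icc 1 m, (C * i * Real.log m) ^ (-a) :=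
          Finset.sum_le_sum step
  constructor
  · refine ⟨1 - a, by linarith, 3, fun m hm => ?_⟩
    have hm3 : (3:ℝ) ≤ (m:ℝ) := by exact_mod_cast hm
    have hlog1 : 1 ≤ Real.log m := by
      have h3 : Real.exp 1 ≤ (m:ℝ) := by
        have := Real.exp_one_lt_d9
        linarith
      calc (1:ℝ) = Real.log (Real.exp 1) := (Real.log_exp 1).symm
        _ ≤ Real.log m := Real.log_le_log (Real.exp_pos 1) h3
    have hsum : ∑ i ∈ Finset.Icc 1 m, (μ {ω | α * ρ * i * Real.log m ≤ X ω}).toReal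
        = ∑ i ∈ Finset.Icc 1 m, (α * ρ * i * Real.log m) ^ (-a) := by
      refine Finset.sum_congr rfl fun i hi => ?_
      simp only [Finset.mem_Icc] at hi
      have hi1 : (1:ℝ) ≤ (i:ℝ) := by exact_mod_cast hi.1
      have h1 : 1 ≤ α * ρ * (i:ℝ) := by nlinarith
      exact hpareto _ (by nlinarith)
    rw [hsum]
    have hkey := key (α * ρ) hαρ.le m hm
    have hpos : (0:ℝ) < (α * ρ * Real.log m) ^ a := by positivity
    have heq : (1 - a) * (m : ℝ) ^ (1 - a) / ((1 - a) * (α * ρ * Real.log m) ^ a)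
        = (m : ℝ) ^ (1 - a) * (α * ρ * Real.log m) ^ (-a) := by
      rw [mul_div_mul_left _ _ (by linarith : (1:ℝ) - a ≠ 0), div_eq_mul_inv,
        ← Real.rpow_neg (by positivity)]
    rw [heq]
    exact hkey
  · -- Summability
    -- lower bound the inner sum for m ≥ 3
    have hbound : ∀ m : ℕ, 3 ≤ m →
        (m : ℝ) ^ (1 - a) * (2 * (α * ρ) * Real.log m) ^ (-a) ≤
          ∑ i ∈ Finset.Icc 1 m, (μ {ω | (m : ℝ) ^ (α * ρ * i) < Real.exp (X ω)}).toReal := by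
      intro m hm
      have hm3 : (3:ℝ) ≤ (m:ℝ) := by exact_mod_cast hm
      have hm0 : (0:ℝ) < m := by linarith
      have hlog1 : 1 ≤ Real.log m := by
        have h3 : Real.exp 1 ≤ (m:ℝ) := by
          have := Real.exp_one_lt_d9
          linarith
        calc (1:ℝ) = Real.log (Real.exp 1) := (Real.log_exp 1).symm
          _ ≤ Real.log m := Real.log_le_log (Real.exp_pos 1) h3
      have htermbd : ∀ i ∈ Finset.Icc 1 m,
          (2 * (α * ρ) * i * Real.log m) ^ (-a) ≤
            (μ {ω | (m : ℝ) ^ (α * ρ * i) < Real.exp (X ω)}).toReal := by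
        intro i hi
        simp only [Finset.mem_Icc] at hi
        have hi1 : (1:ℝ) ≤ (i:ℝ) := by exact_mod_cast hi.1
        have hsub : {ω | 2 * (α * ρ) * i * Real.log m ≤ X ω} ⊆
            {ω | (m : ℝ) ^ (α * ρ * i) < Real.exp (X ω)} := by
          intro ω hω
          simp only [Set.mem_setOf_eq] at hω ⊢
          have hrw : (m : ℝ) ^ (α * ρ * i) = Real.exp (α * ρ * i * Real.log m) := by
            rw [Real.rpow_def_of_pos hm0]; ring_nf
          rw [hrw]
          apply Real.exp_lt_exp.mpr
          have : 0 < α * ρ * i * Real.log m := by positivity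
          nlinarith
        have h2i : 1 ≤ 2 * (α * ρ) * (i:ℝ) := by nlinarith
        calc (2 * (α * ρ) * i * Real.log m) ^ (-a)
            = (μ {ω | 2 * (α * ρ) * i * Real.log m ≤ X ω}).toReal :=
              (hpareto _ (by nlinarith)).symm
          _ ≤ (μ {ω | (m : ℝ) ^ (α * ρ * i) < Real.exp (X ω)}).toReal :=
              ENNReal.toReal_mono (measure_ne_top μ _) (measure_mono hsub)
      calc (m : ℝ) ^ (1 - a) * (2 * (α * ρ) * Real.log m) ^ (-a)
          ≤ ∑ i ∈ Finset.Icc 1 m, (2 * (α * ρ) * i * Real.log m) ^ (-a) :=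
            key (2 * (α * ρ)) (by linarith) m hm
        _ ≤ _ := Finset.sum_le_sum htermbd
    -- eventual comparison to m^{-2}
    set ε : ℝ := (1 - a) / (2 * (1 + a)) with hε
    have hε0 : 0 < ε := by
      apply div_pos <;> nlinarith
    set K : ℝ := 2 * (2 * (α * ρ)) ^ a * (ε ^ (1 + a))⁻¹ with hK
    have hev : ∀ᶠ m : ℕ in Filter.atTop,
        Real.exp (-(∑ i ∈ Finset.Icc 1 m,
            (μ {ω | (m : ℝ) ^ (α * ρ * i) < Real.exp (X ω)}).toReal)) ≤ (m : ℝ) ^ (-2 : ℝ) := by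
      have h1 : Filter.Tendsto (fun m : ℕ => (m : ℝ) ^ ((1 - a) / 2)) Filter.atTop Filter.atTop :=
        (tendsto_rpow_atTop (by linarith)).comp tendsto_natCast_atTop_atTop
      filter_upwards [h1.eventually_ge_atTop K, Filter.eventually_ge_atTop 3] with m hmK hm3
      have hub := hbound m hm3
      have hm3' : (3:ℝ) ≤ (m:ℝ) := by exact_mod_cast hm3
      have hm0 : (0:ℝ) < m := by linarith
      have hlog1 : 1 ≤ Real.log m := by
        have h3 : Real.exp 1 ≤ (m:ℝ) := by
          have := Real.exp_one_lt_d9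
          linarith
        calc (1:ℝ) = Real.log (Real.exp 1) := (Real.log_exp 1).symm
          _ ≤ Real.log m := Real.log_le_log (Real.exp_pos 1) h3
      -- show 2 * log m ≤ m^{1-a} (2αρ log m)^{-a}
      have hlogbd : Real.log m ≤ (m:ℝ) ^ ε / ε := Real.log_le_rpow_div hm0.le hε0
      have hloga : (Real.log m) ^ (1 + a) ≤ (m:ℝ) ^ ((1-a)/2) * (ε ^ (1+a))⁻¹ := by
        calc (Real.log m) ^ (1 + a) ≤ ((m:ℝ) ^ ε / ε) ^ (1+a) :=
              Real.rpow_le_rpow (by linarith) hlogbd (by linarith)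
          _ = (m:ℝ) ^ ((1-a)/2) * (ε ^ (1+a))⁻¹ := by
              have h1a : (1:ℝ) + a ≠ 0 := by positivity
              rw [Real.div_rpow (by positivity) hε0.le, ← Real.rpow_mul hm0.le,
                show ε * (1+a) = (1-a)/2 by rw [hε]; field_simp,
                div_eq_mul_inv]
      have hmain : 2 * Real.log m ≤ (m : ℝ) ^ (1 - a) * (2 * (α * ρ) * Real.log m) ^ (-a) := by
        have hC : 0 < (2 * (α * ρ)) ^ a := by positivity
        have hexp : (2 * (α * ρ) * Real.log m) ^ (-a)
            = ((2 * (α * ρ)) ^ a)⁻¹ * ((Real.log m) ^ a)⁻¹ := by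
          rw [Real.rpow_neg (by positivity), Real.mul_rpow (by positivity) (by linarith),
            mul_inv]
        rw [hexp]
        have hlogapos : 0 < (Real.log m) ^ a := by positivity
        have hKpos : 0 < K := by positivity
        -- suffices: 2 * (2αρ)^a * log m * (log m)^a ≤ m^{1-a}
        rw [show (m : ℝ) ^ (1 - a) * (((2 * (α * ρ)) ^ a)⁻¹ * ((Real.log m) ^ a)⁻¹)
            = ((m : ℝ) ^ (1 - a) / (Real.log m) ^ a) / (2 * (α * ρ)) ^ a by ring,
          le_div_iff₀ hC, le_div_iff₀ hlogapos]
        have h1a : (Real.log m) * (Real.log m) ^ a = (Real.log m) ^ (1 + a) := by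
          rw [Real.rpow_add (by linarith), Real.rpow_one]
        have hsplit : (m:ℝ) ^ (1 - a) = (m:ℝ) ^ ((1-a)/2) * (m:ℝ) ^ ((1-a)/2) := by
          rw [← Real.rpow_add hm0]; ring_nf
        calc 2 * Real.log m * (2 * (α * ρ)) ^ a * (Real.log m) ^ a
            = 2 * (2 * (α * ρ)) ^ a * ((Real.log m) * (Real.log m) ^ a) := by ring
          _ = 2 * (2 * (α * ρ)) ^ a * ((Real.log m) ^ (1 + a)) := by rw [h1a]
          _ ≤ 2 * (2 * (α * ρ)) ^ a * ((m:ℝ) ^ ((1-a)/2) * (ε ^ (1+a))⁻¹) := by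
              apply mul_le_mul_of_nonneg_left hloga (by positivity)
          _ = K * (m:ℝ) ^ ((1-a)/2) := by rw [hK]; ring
          _ ≤ (m:ℝ) ^ ((1-a)/2) * (m:ℝ) ^ ((1-a)/2) := by
              have hnn : (0:ℝ) ≤ (m:ℝ) ^ ((1-a)/2) := by positivity
              nlinarith
          _ = (m:ℝ) ^ (1 - a) := hsplit.symm
      have : Real.exp (-(∑ i ∈ Finset.Icc 1 m,
          (μ {ω | (m : ℝ) ^ (α * ρ * i) < Real.exp (X ω)}).toReal))
          ≤ Real.exp (-(2 * Real.log m)) := by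
        apply Real.exp_le_exp.mpr
        simp only [neg_le_neg_iff]
        linarith
      refine this.trans ?_
      rw [show -(2 * Real.log (m:ℝ)) = Real.log ((m:ℝ) ^ (-2 : ℝ)) by
          rw [Real.log_rpow hm0]; ring,
        Real.exp_log (by positivity)]
    have hsummable2 : Summable (fun m : ℕ => (m : ℝ) ^ (-2 : ℝ)) :=
      Real.summable_nat_rpow.mpr (by norm_num)
    apply summable_of_isBigO_nat hsummable2
    apply Asymptotics.IsBigO.of_bound 1
    filter_upwards [hev, Filter.eventually_ge_atTop 1] with m hm hm1
    have hm0 : (0:ℝ) < m := by exact_mod_cast hm1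
    rw [one_mul, Real.norm_eq_abs, Real.norm_eq_abs, abs_of_pos (Real.exp_pos _),
      abs_of_pos (by positivity)]
    exact hm
end
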